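/- In the two-step matching process (interview matching computed by hospital-proposing deferred acceptance under interview capacities, followed by doctor-proposing deferred acceptance restricted to interview partners), if the doctors' interview capacities are weakly increased from κ to κ', then in the hospital-proposing deferred acceptance of the interview step under κ', no doctor ever rejects a hospital with whom she was matched in the interview matching under κ. -/

import Mathlib

/- Formal model of the two-step interview-then-match process of
Echenique-et-al-style markets: Step 1 computes the interview matching by
hospital-proposing deferred acceptance (with responsive, capacity-constrained
choice functions); Step 2 computes the final one-to-one matching by
doctor-proposing deferred acceptance on preferences restricted to interview
partners. -/

open Finset

section Model

variable {D H : Type*} [Fintype D] [Fintype H] [DecidableEq D] [DecidableEq H]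

/-- The (at most) `n` best elements of `s` according to `rank` (lower rank = better). -/
def topN {α : Type*} [DecidableEq α] (rank : α → ℕ) (n : ℕ) (s : Finset α) : Finset α :=
  s.filter fun x => (s.filter fun y => rank y < rank x).card < n

/-- A market: strict preferences represented by rank functions
(lower rank = more preferred) together with acceptability predicates. -/
structure Market (D H : Type*) where
  rankDH : D → H → ℕ
  accD : D → H → Bool
  rankHD : H → D → ℕ
  accH : H → D → Bool

/-- Strict preferences: rank functions are injective. -/
def Market.Strict (M : Market D H) : Prop :=
  (∀ d, Function.Injective (M.rankDH d)) ∧ (∀ h, Function.Injective (M.rankHD h))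

/-- Hospital `h` proposes to its `ι h` best acceptable doctors that have not rejected it. -/
def hProps (M : Market D H) (ι : H → ℕ) (R : Finset (H × D)) (h : H) : Finset D :=
  topN (M.rankHD h) (ι h) (univ.filter fun d => M.accH h d ∧ (h, d) ∉ R)

/-- Doctor `d` keeps her `κ d` best acceptable proposals. -/
def dKeeps (M : Market D H) (ι : H → ℕ) (κ : D → ℕ) (R : Finset (H × D)) (d : D) :
    Finset H :=
  topN (fun h => M.rankDH d h) (κ d) (univ.filter fun h => M.accD d h ∧ d ∈ hProps M ι R h)

/-- One round of hospital-proposing deferred acceptance: the (cumulative) rejection set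
grows by the proposals not kept. -/
def iStep (M : Market D H) (ι : H → ℕ) (κ : D → ℕ) (R : Finset (H × D)) :
    Finset (H × D) :=
  R ∪ univ.filter fun p : H × D => p.2 ∈ hProps M ι R p.1 ∧ p.1 ∉ dKeeps M ι κ R p.2

/-- Rejection set at the end of hospital-proposing DA (interview step). -/
def iRej (M : Market D H) (ι : H → ℕ) (κ : D → ℕ) : Finset (H × D) :=
  (iStep M ι κ)^[Fintype.card D * Fintype.card H] ∅

/-- The interview matching (the hospital-optimal stable many-to-many matching) computed
by hospital-proposing deferred acceptance: pairs `(h, d)` such that `h` interviews `d`. -/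
def interviews (M : Market D H) (ι : H → ℕ) (κ : D → ℕ) : Finset (H × D) :=
  univ.filter fun p : H × D =>
    p.2 ∈ hProps M ι (iRej M ι κ) p.1 ∧ p.1 ∈ dKeeps M ι κ (iRej M ι κ) p.2

/-- Doctor `d` proposes to her best interview partner that has not rejected her. -/
def dProps (M : Market D H) (V : Finset (H × D)) (S : Finset (D × H)) (d : D) :
    Finset H :=
  topN (M.rankDH d) 1 (univ.filter fun h => (h, d) ∈ V ∧ (d, h) ∉ S)

/-- Hospital `h` keeps its best proposal. -/
def hKeeps (M : Market D H) (V : Finset (H × D)) (S : Finset (D × H)) (h : H) :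
    Finset D :=
  topN (M.rankHD h) 1 (univ.filter fun d => h ∈ dProps M V S d)

/-- One round of doctor-proposing DA on preferences restricted to the interview matching `V`. -/
def mStep (M : Market D H) (V : Finset (H × D)) (S : Finset (D × H)) : Finset (D × H) :=
  S ∪ univ.filter fun p : D × H => p.2 ∈ dProps M V S p.1 ∧ p.1 ∉ hKeeps M V S p.2

/-- Rejection set at the end of the doctor-proposing DA of the matching step. -/
def mRej (M : Market D H) (V : Finset (H × D)) : Finset (D × H) :=
  (mStep M V)^[Fintype.card D * Fintype.card H] ∅

/-- The final matching: doctor-proposing DA on preferences restricted to interviews `V`. -/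
def finalMatch (M : Market D H) (V : Finset (H × D)) : Finset (D × H) :=
  univ.filter fun p : D × H =>
    p.2 ∈ dProps M V (mRej M V) p.1 ∧ p.1 ∈ hKeeps M V (mRej M V) p.2

/-- The `(ι,κ)`-matching: the culmination of the two-step process. -/
def ikMatching (M : Market D H) (ι : H → ℕ) (κ : D → ℕ) : Finset (D × H) :=
  finalMatch M (interviews M ι κ)

/-- `(d, h)` is a blocking pair of `μ` (w.r.t. the true, unrestricted preferences). -/
def Blocks (M : Market D H) (μ : Finset (D × H)) (d : D) (h : H) : Prop :=
  M.accD d h ∧ M.accH h d ∧ (d, h) ∉ μ ∧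
    (∀ h', (d, h') ∈ μ → M.rankDH d h < M.rankDH d h') ∧
    (∀ d', (d', h) ∈ μ → M.rankHD h d < M.rankHD h d')

instance (M : Market D H) (μ : Finset (D × H)) (d : D) (h : H) :
    Decidable (Blocks M μ d h) := by
  unfold Blocks; infer_instance

/-- A matching is stable if it admits no blocking pair. -/
def Stable (M : Market D H) (μ : Finset (D × H)) : Prop := ∀ d h, ¬ Blocks M μ d h

/-- `(ι,κ)` is adequate at `M` if the `(ι,κ)`-matching is stable. -/
def Adequate (M : Market D H) (ι : H → ℕ) (κ : D → ℕ) : Prop :=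
  Stable M (ikMatching M ι κ)

/-- One-to-one matching (as a set of pairs). -/
def IsMatching (μ : Finset (D × H)) : Prop :=
  (∀ d h h', (d, h) ∈ μ → (d, h') ∈ μ → h = h') ∧
    (∀ d d' h, (d, h) ∈ μ → (d', h) ∈ μ → d = d')

/-- Common preferences: all doctors rank the hospitals identically, all hospitals rank
the doctors identically, everyone is mutually acceptable (and preferences are strict). -/
def CommonPrefs (M : Market D H) : Prop :=
  M.Strict ∧ (∀ d d', M.rankDH d = M.rankDH d') ∧ (∀ h h', M.rankHD h = M.rankHD h') ∧
    ∀ d h, M.accD d h ∧ M.accH h d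

/-- Number of hospitals matched under `μ`. -/
def matchedHospitals (μ : Finset (D × H)) : ℕ :=
  (univ.filter fun h : H => ∃ d, (d, h) ∈ μ).card

/-- Number of blocking pairs of `μ`. -/
def blockingCount (M : Market D H) (μ : Finset (D × H)) : ℕ :=
  (univ.filter fun p : D × H => Blocks M μ p.1 p.2).card

end Model

/-- `(ι,κ)` is globally adequate: adequate at every (strict) preference profile. -/
def GloballyAdequate (D H : Type*) [Fintype D] [Fintype H] [DecidableEq D] [DecidableEq H]
    (ι : H → ℕ) (κ : D → ℕ) : Prop :=
  ∀ M : Market D H, M.Strict → Adequate M ι κ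

variable {D H : Type*} [Fintype D] [Fintype H] [DecidableEq D] [DecidableEq H]

section Aux

lemma topN_subset' {α : Type*} [DecidableEq α] (rank : α → ℕ) (n : ℕ) (s : Finset α) :
    topN rank n s ⊆ s := filter_subset _ _

lemma mem_topN_of_subset' {α : Type*} [DecidableEq α] {rank : α → ℕ} {n : ℕ}
    {s t : Finset α} {x : α} (hts : t ⊆ s) (hx : x ∈ topN rank n s) (hxt : x ∈ t) :
    x ∈ topN rank n t := by
  simp only [topN, mem_filter] at hx ⊢
  exact ⟨hxt, lt_of_le_of_lt (card_le_card (filter_subset_filter _ hts)) hx.2⟩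

lemma min_le_card_topN {α : Type*} [DecidableEq α] (rank : α → ℕ) (s : Finset α) :
    ∀ n, min n s.card ≤ (topN rank n s).card := by
  induction s using Finset.strongInduction with
  | _ s ih =>
    intro n
    rcases Nat.eq_zero_or_pos n with h0 | hn
    · simp [h0]
    rcases s.eq_empty_or_nonempty with rfl | hs
    · simp
    obtain ⟨x, hxs, hxmin⟩ := s.exists_min_image rank hs
    obtain ⟨m, rfl⟩ := Nat.exists_eq_succ_of_ne_zero (Nat.pos_iff_ne_zero.mp hn)
    have hsub : insert x (topN rank m (s.erase x)) ⊆ topN rank (m + 1) s := by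
      intro y hy
      rcases mem_insert.mp hy with rfl | hy
      · refine mem_filter.mpr ⟨hxs, ?_⟩
        have hemp : s.filter (fun z => rank z < rank y) = ∅ :=
          filter_eq_empty_iff.mpr fun z hz => not_lt.mpr (hxmin z hz)
        simp [hemp]
      · have hy' := mem_filter.mp hy
        refine mem_filter.mpr ⟨mem_of_mem_erase hy'.1, ?_⟩
        have hsub2 : s.filter (fun z => rank z < rank y) ⊆
            insert x ((s.erase x).filter (fun z => rank z < rank y)) := by
          intro z hz
          rcases eq_or_ne z x with rfl | hzx
          · exact mem_insert_self _ _
          · exact mem_insert_of_mem (mem_filter.mpr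
              ⟨mem_erase.mpr ⟨hzx, (mem_filter.mp hz).1⟩, (mem_filter.mp hz).2⟩)
        calc (s.filter (fun z => rank z < rank y)).card
            ≤ (insert x ((s.erase x).filter (fun z => rank z < rank y))).card :=
              card_le_card hsub2
          _ ≤ ((s.erase x).filter (fun z => rank z < rank y)).card + 1 := card_insert_le _ _
          _ < m + 1 := Nat.add_lt_add_right hy'.2 1
    have hx' : x ∉ topN rank m (s.erase x) :=
      fun hx => (notMem_erase x s) (topN_subset' _ _ _ hx)
    have hcard : (topN rank m (s.erase x)).card + 1 ≤ (topN rank (m + 1) s).card := by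
      have hcc := card_le_card hsub
      rwa [card_insert_of_notMem hx'] at hcc
    have hrec := ih (s.erase x) (erase_ssubset hxs) m
    have hmain : min m (s.erase x).card + 1 ≤ (topN rank (m + 1) s).card :=
      le_trans (Nat.add_le_add_right hrec 1) hcard
    rw [card_erase_of_mem hxs] at hmain
    have hpos : 1 ≤ s.card := hs.card_pos
    show min (m + 1) s.card ≤ (topN rank (m + 1) s).card
    omega

variable {D H : Type*} [Fintype D] [Fintype H] [DecidableEq D] [DecidableEq H]

lemma subset_iStep (M : Market D H) (ι : H → ℕ) (κ : D → ℕ) (R : Finset (H × D)) :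
    R ⊆ iStep M ι κ R := subset_union_left

/-- If a hospital keeps proposing (its proposal was kept), it still proposes next round. -/
lemma hProps_persist (M : Market D H) (ι : H → ℕ) (κ : D → ℕ) {R : Finset (H × D)}
    {d : D} {h₁ : H} (hk : h₁ ∈ dKeeps M ι κ R d) :
    d ∈ hProps M ι (iStep M ι κ R) h₁ := by
  have hmem := mem_filter.mp (topN_subset' _ _ _ hk)
  have hprop : d ∈ hProps M ι R h₁ := hmem.2.2
  have hdS := mem_filter.mp (topN_subset' _ _ _ hprop)
  have hnotR : (h₁, d) ∉ R := hdS.2.2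
  have hnotR' : (h₁, d) ∉ iStep M ι κ R := by
    intro hin
    rcases mem_union.mp hin with hc | hc
    · exact hnotR hc
    · exact (mem_filter.mp hc).2.2 hk
  refine mem_topN_of_subset' ?_ hprop (mem_filter.mpr ⟨mem_univ _, hdS.2.1, hnotR'⟩)
  intro d' hd'
  have hd'' := mem_filter.mp hd'
  exact mem_filter.mpr ⟨mem_univ _, hd''.2.1, fun hc => hd''.2.2 (subset_iStep M ι κ R hc)⟩

/-- Invariant of a single DA run: whenever a doctor has rejected an acceptable hospital,
she currently keeps a full slate of κ d strictly better hospitals. -/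
def Qinv (M : Market D H) (ι : H → ℕ) (κ : D → ℕ) (R : Finset (H × D)) : Prop :=
  ∀ d h₀, M.accD d h₀ → (h₀, d) ∈ R →
    κ d ≤ (dKeeps M ι κ R d).card ∧
      ∀ h₁ ∈ dKeeps M ι κ R d, M.rankDH d h₁ < M.rankDH d h₀

lemma Qinv_step (M : Market D H) (ι : H → ℕ) (κ : D → ℕ) {R : Finset (H × D)}
    (hQ : Qinv M ι κ R) : Qinv M ι κ (iStep M ι κ R) := by
  intro d h₀ hacc hmem
  have key : κ d ≤ (dKeeps M ι κ R d).card ∧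
      ∀ h₁ ∈ dKeeps M ι κ R d, M.rankDH d h₁ < M.rankDH d h₀ := by
    rcases mem_union.mp hmem with hR | hnew
    · exact hQ d h₀ hacc hR
    · simp only [mem_filter, mem_univ, true_and] at hnew
      obtain ⟨hprop, hnk⟩ := hnew
      set S := univ.filter (fun h => M.accD d h ∧ d ∈ hProps M ι R h) with hSdef
      have hh₀S : h₀ ∈ S := mem_filter.mpr ⟨mem_univ _, hacc, hprop⟩
      have hbig : κ d ≤ (S.filter fun z => M.rankDH d z < M.rankDH d h₀).card := by
        by_contra hlt
        exact hnk (mem_filter.mpr ⟨hh₀S, Nat.lt_of_not_le hlt⟩)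
      constructor
      · have hm := min_le_card_topN (fun h => M.rankDH d h) S (κ d)
        have hScard : κ d ≤ S.card := le_trans hbig (card_le_card (filter_subset _ _))
        have : dKeeps M ι κ R d = topN (fun h => M.rankDH d h) (κ d) S := rfl
        rw [this]
        omega
      · intro h₁ hh₁
        by_contra hge
        push_neg at hge
        have h₁top := mem_filter.mp hh₁
        have hsubf : (S.filter fun z => M.rankDH d z < M.rankDH d h₀) ⊆
            (S.filter fun z => M.rankDH d z < M.rankDH d h₁) :=
          fun x hx => mem_filter.mpr ⟨(mem_filter.mp hx).1, lt_of_lt_of_le (mem_filter.mp hx).2 hge⟩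
        have := lt_of_le_of_lt (le_trans hbig (card_le_card hsubf)) h₁top.2
        exact lt_irrefl _ this
  obtain ⟨hcard, hbetter⟩ := key
  set S' := univ.filter (fun h => M.accD d h ∧ d ∈ hProps M ι (iStep M ι κ R) h) with hS'def
  have hKsub : dKeeps M ι κ R d ⊆ S' := by
    intro h₁ hh₁
    have h1 := mem_filter.mp (topN_subset' _ _ _ hh₁)
    exact mem_filter.mpr ⟨mem_univ _, h1.2.1, hProps_persist M ι κ hh₁⟩
  have hdk' : dKeeps M ι κ (iStep M ι κ R) d = topN (fun h => M.rankDH d h) (κ d) S' := rfl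
  constructor
  · have hS'card : κ d ≤ S'.card := le_trans hcard (card_le_card hKsub)
    have hm := min_le_card_topN (fun h => M.rankDH d h) S' (κ d)
    rw [hdk']
    omega
  · intro h₁ hh₁
    by_contra hge
    push_neg at hge
    rw [hdk'] at hh₁
    have h₁top := mem_filter.mp hh₁
    have hKsub2 : dKeeps M ι κ R d ⊆ S'.filter fun z => M.rankDH d z < M.rankDH d h₁ :=
      fun h₂ hh₂ => mem_filter.mpr ⟨hKsub hh₂, lt_of_lt_of_le (hbetter h₂ hh₂) hge⟩
    have := lt_of_le_of_lt (le_trans hcard (card_le_card hKsub2)) h₁top.2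
    exact lt_irrefl _ this

lemma Qinv_iterate (M : Market D H) (ι : H → ℕ) (κ : D → ℕ) (t : ℕ) :
    Qinv M ι κ ((iStep M ι κ)^[t] ∅) := by
  induction t with
  | zero => intro d h₀ _ hmem; simp at hmem
  | succ t ih => rw [Function.iterate_succ_apply']; exact Qinv_step M ι κ ih

lemma Qinv_iRej (M : Market D H) (ι : H → ℕ) (κ : D → ℕ) : Qinv M ι κ (iRej M ι κ) :=
  Qinv_iterate M ι κ _

lemma iterate_fixed {α : Type*} [Fintype α] [DecidableEq α]
    (f : Finset α → Finset α) (hf : ∀ s, s ⊆ f s) (n : ℕ) (hn : Fintype.card α ≤ n) :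
    f (f^[n] ∅) = f^[n] ∅ := by
  have key : ∀ k, f (f^[k] ∅) = f^[k] ∅ ∨ k ≤ (f^[k] ∅).card := by
    intro k
    induction k with
    | zero => right; simp
    | succ k ih =>
      rcases eq_or_ne (f (f^[k] ∅)) (f^[k] ∅) with hfix | hne
      · left; rw [Function.iterate_succ_apply', hfix, hfix]
      · rcases ih with hfix | hcard
        · exact absurd hfix hne
        · right
          rw [Function.iterate_succ_apply']
          have hss : f^[k] ∅ ⊂ f (f^[k] ∅) := (hf _).ssubset_of_ne (Ne.symm hne)
          have := card_lt_card hss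
          omega
  rcases key n with h | h
  · exact h
  · have huniv : f^[n] ∅ = univ := by
      apply eq_univ_of_card
      have h2 : (f^[n] ∅).card ≤ Fintype.card α := card_le_univ _
      omega
    rw [huniv]
    exact subset_antisymm (subset_univ _) (hf _)

lemma iRej_fixed (M : Market D H) (ι : H → ℕ) (κ : D → ℕ) :
    iStep M ι κ (iRej M ι κ) = iRej M ι κ := by
  apply iterate_fixed (iStep M ι κ) (subset_iStep M ι κ)
  rw [Fintype.card_prod]
  exact le_of_eq (Nat.mul_comm _ _)

/-- Main lemma: the rejection set of the κ'-run stays inside the final rejection set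
of the κ-run. -/
lemma run_subset (M : Market D H) (ι : H → ℕ) (κ κ' : D → ℕ)
    (hκ : ∀ d, κ d ≤ κ' d) (t : ℕ) :
    (iStep M ι κ')^[t] ∅ ⊆ iRej M ι κ := by
  induction t with
  | zero => simp
  | succ t ih =>
    rw [Function.iterate_succ_apply']
    set R' := (iStep M ι κ')^[t] ∅ with hR'def
    intro p hp
    rcases mem_union.mp hp with hc | hc
    · exact ih hc
    obtain ⟨a, d⟩ := p
    simp only [mem_filter, mem_univ, true_and] at hc
    obtain ⟨ha1, ha2⟩ := hc
    by_contra hnot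
    -- Step 1 : d ∈ hProps at iRej
    have haccH : M.accH a d := by
      have := mem_filter.mp (topN_subset' _ _ _ ha1)
      exact this.2.1
    have hstep1 : d ∈ hProps M ι (iRej M ι κ) a := by
      refine mem_topN_of_subset' ?_ ha1 (mem_filter.mpr ⟨mem_univ _, haccH, hnot⟩)
      intro d' hd'
      have hd'' := mem_filter.mp hd'
      exact mem_filter.mpr ⟨mem_univ _, hd''.2.1, fun hcc => hd''.2.2 (ih hcc)⟩
    -- Step 2 : a is kept by d at iRej under κ
    have hkept : a ∈ dKeeps M ι κ (iRej M ι κ) d := by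
      by_contra hnk
      apply hnot
      rw [← iRej_fixed M ι κ]
      exact mem_union_right _ (mem_filter.mpr ⟨mem_univ _, hstep1, hnk⟩)
    have haccD : M.accD d a := (mem_filter.mp (topN_subset' _ _ _ hkept)).2.1
    set Sstar := univ.filter (fun h => M.accD d h ∧ d ∈ hProps M ι (iRej M ι κ) h)
      with hSstar
    set S' := univ.filter (fun h => M.accD d h ∧ d ∈ hProps M ι R' h) with hS'
    have hcount_star : (Sstar.filter fun z => M.rankDH d z < M.rankDH d a).card < κ d :=
      (mem_filter.mp hkept).2
    -- Step 3 : a rejected by d at R' under κ'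
    have haS' : a ∈ S' := mem_filter.mpr ⟨mem_univ _, haccD, ha1⟩
    have hcount' : κ' d ≤ (S'.filter fun z => M.rankDH d z < M.rankDH d a).card := by
      by_contra hlt
      exact ha2 (mem_filter.mpr ⟨haS', Nat.lt_of_not_le hlt⟩)
    -- Step 4 : find a witness h₂ proposing at R' but not at iRej
    have hlt : (Sstar.filter fun z => M.rankDH d z < M.rankDH d a).card <
        (S'.filter fun z => M.rankDH d z < M.rankDH d a).card :=
      lt_of_lt_of_le hcount_star (le_trans (hκ d) hcount')
    obtain ⟨h₂, hh₂mem, hh₂not⟩ := Finset.not_subset.mp (fun hss => absurd (card_le_card hss) (not_le.mpr hlt))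
    have hh₂ := mem_filter.mp hh₂mem
    have hh₂S' := mem_filter.mp hh₂.1
    have haccD₂ : M.accD d h₂ := hh₂S'.2.1
    have hprop₂ : d ∈ hProps M ι R' h₂ := hh₂S'.2.2
    have hrank₂ : M.rankDH d h₂ < M.rankDH d a := hh₂.2
    have hnprop : d ∉ hProps M ι (iRej M ι κ) h₂ := by
      intro hcc
      exact hh₂not (mem_filter.mpr ⟨mem_filter.mpr ⟨mem_univ _, haccD₂, hcc⟩, hrank₂⟩)
    have hrej₂ : (h₂, d) ∈ iRej M ι κ := by
      by_contra hnr
      apply hnprop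
      have haccH₂ : M.accH h₂ d := (mem_filter.mp (topN_subset' _ _ _ hprop₂)).2.1
      refine mem_topN_of_subset' ?_ hprop₂ (mem_filter.mpr ⟨mem_univ _, haccH₂, hnr⟩)
      intro d' hd'
      have hd'' := mem_filter.mp hd'
      exact mem_filter.mpr ⟨mem_univ _, hd''.2.1, fun hcc => hd''.2.2 (ih hcc)⟩
    -- invariant Q at iRej gives κ d better proposers, contradiction
    obtain ⟨hqc, hqb⟩ := Qinv_iRej M ι κ d h₂ haccD₂ hrej₂
    have hKsub : dKeeps M ι κ (iRej M ι κ) d ⊆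
        Sstar.filter fun z => M.rankDH d z < M.rankDH d a := by
      intro x hx
      refine mem_filter.mpr ⟨topN_subset' _ _ _ hx, ?_⟩
      exact lt_trans (hqb x hx) hrank₂
    have := le_trans hqc (card_le_card hKsub)
    omega

end Aux

/-- If doctors' interview capacities weakly increase from `κ` to `κ'`,
then during the hospital-proposing DA of the interview step under `κ'`, no doctor
ever rejects a hospital with whom she was matched in the interview matching under `κ`:
an interview pair of the `κ`-run never enters the rejection set of the `κ'`-run. -/
theorem no_doctor_rejects_previous_interview
    (M : Market D H) (hM : M.Strict) (ι : H → ℕ) (κ κ' : D → ℕ)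
    (hκ : ∀ d, κ d ≤ κ' d) :
    ∀ (t : ℕ) (h : H) (d : D),
      (h, d) ∈ interviews M ι κ → (h, d) ∉ (iStep M ι κ')^[t] (∅ : Finset (H × D)) := by
  intro t h d hint hmem
  have hprop : d ∈ hProps M ι (iRej M ι κ) h := by
    have := Finset.mem_filter.mp hint
    exact this.2.1
  have hnot : (h, d) ∉ iRej M ι κ :=
    (Finset.mem_filter.mp (topN_subset' _ _ _ hprop)).2.2
  exact hnot (run_subset M ι κ κ' hκ t hmem)
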